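/- arXiv:2312.09181 — 2 statements merged into one kernel-verified Lean document; each statement's English description precedes it below -/
import Mathlib

section
/- Let n, N be positive integers and y_1, …, y_N ∈ ℝⁿ. For s, σ > 0 let ε*_{s,σ}(x) = (1/(sσ)) · ( x − s · (Σ_i N(x; s y_i, s²σ²I) y_i)/(Σ_i N(x; s y_i, s²σ²I)) ) be the optimal denoiser. Then for every x_0, ε ∈ ℝⁿ and every choice of s = s(σ) > 0, ε*_{s,σ}( s (x_0 + σ ε) ) → ε as σ → ∞. In other words, evaluated on the forward-perturbed input x_t = s x_0 + s σ ε, the optimal denoiser converges to the identity mapping ε ↦ ε in the high-noise limit. -/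
open MeasureTheory Real Finset Filter Topology

/-- Isotropic Gaussian density `N(x; μ, τ²I)` on `ℝⁿ`. -/
noncomputable def gaussDensity (n : ℕ) (μ : EuclideanSpace ℝ (Fin n)) (τ : ℝ)
    (x : EuclideanSpace ℝ (Fin n)) : ℝ :=
  (2 * Real.pi * τ ^ 2) ^ (-(n : ℝ) / 2) * Real.exp (-‖x - μ‖ ^ 2 / (2 * τ ^ 2))

/-- The optimal denoiser
`ε*_{s,σ}(x) = (1/(sσ)) (x − s (Σᵢ N(x; s yᵢ, s²σ²I) yᵢ) / (Σᵢ N(x; s yᵢ, s²σ²I)))`. -/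
noncomputable def optDenoiser (n N : ℕ) (y : Fin N → EuclideanSpace ℝ (Fin n)) (s σ : ℝ)
    (x : EuclideanSpace ℝ (Fin n)) : EuclideanSpace ℝ (Fin n) :=
  (1 / (s * σ)) •
    (x - s • ((∑ i, gaussDensity n (s • y i) (s * σ) x)⁻¹ •
      ∑ i, gaussDensity n (s • y i) (s * σ) x • y i))

/-- High-noise limit: evaluated on the forward-perturbed input `x_t = s(x₀ + σ ε)`, the
optimal denoiser converges to the identity mapping `ε ↦ ε` as `σ → ∞`, for any choice of
scaling `s = s(σ) > 0`. -/
theorem optDenoiser_tendsto_identity_high_noise (n N : ℕ) (hn : 0 < n) (hN : 0 < N)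
    (y : Fin N → EuclideanSpace ℝ (Fin n)) (x₀ ε : EuclideanSpace ℝ (Fin n))
    (s : ℝ → ℝ) (hs : ∀ σ, 0 < s σ) :
    Tendsto (fun σ : ℝ => optDenoiser n N y (s σ) σ ((s σ) • (x₀ + σ • ε)))
      atTop (𝓝 ε) := by
  set M := ∑ i, ‖y i‖ with hM
  have hM0 : 0 ≤ M := Finset.sum_nonneg fun i _ => norm_nonneg _
  have key : ∀ σ : ℝ, 1 ≤ σ →
      ‖optDenoiser n N y (s σ) σ ((s σ) • (x₀ + σ • ε)) - ε‖ ≤ σ⁻¹ * (‖x₀‖ + M) := by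
    intro σ hσ
    have hσ0 : (0:ℝ) < σ := lt_of_lt_of_le one_pos hσ
    have hs0 : 0 < s σ := hs σ
    set x : EuclideanSpace ℝ (Fin n) := (s σ) • (x₀ + σ • ε) with hx
    set d : Fin N → ℝ := fun i => gaussDensity n ((s σ) • y i) (s σ * σ) x with hd
    have hdpos : ∀ i, 0 < d i := by
      intro i
      simp only [hd, gaussDensity]
      have h1 : (0:ℝ) < 2 * Real.pi * (s σ * σ) ^ 2 := by positivity
      positivity
    set S := ∑ i, d i with hS
    have hNe : (Finset.univ : Finset (Fin N)).Nonempty := ⟨⟨0, hN⟩, Finset.mem_univ _⟩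
    have hSpos : 0 < S := Finset.sum_pos (fun i _ => hdpos i) hNe
    set w : EuclideanSpace ℝ (Fin n) := S⁻¹ • ∑ i, d i • y i with hw
    have hwnorm : ‖w‖ ≤ M := by
      have h1 : ‖∑ i, d i • y i‖ ≤ ∑ i, d i * ‖y i‖ := by
        refine (norm_sum_le _ _).trans ?_
        refine Finset.sum_le_sum fun i _ => ?_
        rw [norm_smul, Real.norm_eq_abs, abs_of_pos (hdpos i)]
      calc ‖w‖ = S⁻¹ * ‖∑ i, d i • y i‖ := by
            rw [hw, norm_smul, Real.norm_eq_abs, abs_of_pos (inv_pos.2 hSpos)]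
        _ ≤ S⁻¹ * ∑ i, d i * ‖y i‖ := by
            exact mul_le_mul_of_nonneg_left h1 (le_of_lt (inv_pos.2 hSpos))
        _ = ∑ i, (S⁻¹ * d i) * ‖y i‖ := by
            rw [Finset.mul_sum]; apply Finset.sum_congr rfl; intro i _; ring
        _ ≤ ∑ i, 1 * ‖y i‖ := by
            refine Finset.sum_le_sum fun i _ => ?_
            refine mul_le_mul_of_nonneg_right ?_ (norm_nonneg _)
            rw [inv_mul_le_iff₀ hSpos, mul_one]
            exact Finset.single_le_sum (fun j _ => (hdpos j).le) (Finset.mem_univ i)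
        _ = M := by simp [hM]
    have heq : optDenoiser n N y (s σ) σ x = ε + σ⁻¹ • (x₀ - w) := by
      rw [optDenoiser]
      have : (s σ) • (x₀ + σ • ε) - (s σ) • w = (s σ) • (x₀ + σ • ε - w) := by
        rw [smul_sub]
      show (1 / (s σ * σ)) • (x - s σ • w) = ε + σ⁻¹ • (x₀ - w)
      rw [hx, this, smul_smul]
      have hcoef : 1 / (s σ * σ) * s σ = σ⁻¹ := by
        field_simp
      rw [hcoef, smul_sub, smul_add, smul_smul, inv_mul_cancel₀ (ne_of_gt hσ0), one_smul,
        smul_sub]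
      abel
    rw [heq]
    have : ε + σ⁻¹ • (x₀ - w) - ε = σ⁻¹ • (x₀ - w) := by abel
    rw [this, norm_smul, Real.norm_eq_abs, abs_of_pos (inv_pos.2 hσ0)]
    have : ‖x₀ - w‖ ≤ ‖x₀‖ + M :=
      (norm_sub_le _ _).trans (add_le_add_right hwnorm _)
    exact mul_le_mul_of_nonneg_left this (le_of_lt (inv_pos.2 hσ0))
  have hlim : Tendsto (fun σ : ℝ => σ⁻¹ * (‖x₀‖ + M)) atTop (𝓝 0) := by
    simpa using tendsto_inv_atTop_zero.mul_const (‖x₀‖ + M)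
  rw [tendsto_iff_norm_sub_tendsto_zero]
  refine squeeze_zero_norm' ?_ hlim
  filter_upwards [eventually_ge_atTop (1:ℝ)] with σ hσ
  simpa using key σ hσ
end

section
/- Let n, N be positive integers and y_1, …, y_N ∈ ℝⁿ. Fix an index j such that y_i ≠ y_j for all i ≠ j, and fix ε ∈ ℝⁿ. For s, σ > 0 let ε*_{s,σ}(x) = (1/(sσ)) · ( x − s · (Σ_i N(x; s y_i, s²σ²I) y_i)/(Σ_i N(x; s y_i, s²σ²I)) ) be the optimal denoiser. Then for every choice of s = s(σ) > 0, ε*_{s,σ}( s (y_j + σ ε) ) → ε as σ → 0⁺. -/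
set_option maxHeartbeats 1000000


open MeasureTheory Real Finset Filter Topology

/-- Superexponential decay: if `f → a > 0` then `exp(-f σ/(2σ²))/σ → 0` as `σ → 0⁺`. -/
lemma decay_aux (a : ℝ) (ha : 0 < a) (f : ℝ → ℝ) (hf : Tendsto f (𝓝[>] (0:ℝ)) (𝓝 a)) :
    Tendsto (fun σ : ℝ => Real.exp (-f σ / (2 * σ ^ 2)) / σ) (𝓝[>] (0:ℝ)) (𝓝 0) := by
  have h1 : Tendsto (fun σ : ℝ => σ⁻¹) (𝓝[>] (0:ℝ)) atTop := tendsto_inv_nhdsGT_zero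
  have h2 : Tendsto (fun σ : ℝ => (a/4) * σ⁻¹ - 1) (𝓝[>] (0:ℝ)) atTop := by
    have := (h1.const_mul_atTop (by positivity : (0:ℝ) < a/4))
    simpa [sub_eq_add_neg] using tendsto_atTop_add_const_right _ (-1 : ℝ) this
  have h3 : Tendsto (fun σ : ℝ => σ⁻¹ * ((a/4) * σ⁻¹ - 1)) (𝓝[>] (0:ℝ)) atTop :=
    h1.atTop_mul_atTop₀ h2
  have h4 : Tendsto (fun σ : ℝ => -(σ⁻¹ * ((a/4) * σ⁻¹ - 1))) (𝓝[>] (0:ℝ)) atBot :=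
    tendsto_neg_atTop_atBot.comp h3
  have hev : ∀ᶠ σ in 𝓝[>] (0:ℝ), -f σ / (2 * σ ^ 2) - Real.log σ ≤
      -(σ⁻¹ * ((a/4) * σ⁻¹ - 1)) := by
    have hfa : ∀ᶠ σ in 𝓝[>] (0:ℝ), a/2 ≤ f σ :=
      hf.eventually (eventually_ge_nhds (by linarith : a/2 < a))
    filter_upwards [hfa, self_mem_nhdsWithin] with σ hfσ (hσ : 0 < σ)
    have hσ2 : 0 < σ ^ 2 := by positivity
    have hlog : -Real.log σ ≤ σ⁻¹ := by
      have := Real.log_le_sub_one_of_pos (show 0 < σ⁻¹ by positivity)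
      rw [Real.log_inv] at this; linarith
    have heq : -(σ⁻¹ * ((a/4) * σ⁻¹ - 1)) = -(a/2) / (2 * σ ^ 2) + σ⁻¹ := by
      field_simp; ring
    rw [heq]
    have : -f σ / (2 * σ ^ 2) ≤ -(a/2)/(2*σ^2) := by gcongr
    linarith
  have h5 : Tendsto (fun σ : ℝ => -f σ / (2 * σ ^ 2) - Real.log σ) (𝓝[>] (0:ℝ)) atBot :=
    tendsto_atBot_mono' _ hev h4
  have h6 := Real.tendsto_exp_atBot.comp h5
  refine h6.congr' ?_
  filter_upwards [self_mem_nhdsWithin] with σ (hσ : 0 < σ)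
  simp only [Function.comp, Real.exp_sub, Real.exp_log hσ]

/-- Pure module algebra behind the simplification of the denoiser. -/
lemma alg_aux {F : Type*} [AddCommGroup F] [Module ℝ F] (a ε V : F) (t σ C S : ℝ)
    (ht : t ≠ 0) (hσ : σ ≠ 0) (hC : C ≠ 0) (hS : S ≠ 0) :
    (1 / (t * σ)) • (t • (a + σ • ε) - t • ((C * S)⁻¹ • (C • V))) =
      ε + (σ⁻¹ * S⁻¹) • (S • a - V) := by
  match_scalars <;> field_simp <;> ring

/-- On the perturbed data point, the denoiser simplifies: the Gaussian prefactor and the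
scaling `s` cancel. -/
lemma key_eq (n N : ℕ) (hN : 0 < N) (y : Fin N → EuclideanSpace ℝ (Fin n)) (j : Fin N)
    (ε : EuclideanSpace ℝ (Fin n)) (t σ : ℝ) (ht : 0 < t) (hσ : 0 < σ) :
    optDenoiser n N y t σ (t • (y j + σ • ε)) =
      ε + (σ⁻¹ * (∑ i, Real.exp (-‖y j + σ • ε - y i‖ ^ 2 / (2 * σ ^ 2)))⁻¹) •
        ∑ i, Real.exp (-‖y j + σ • ε - y i‖ ^ 2 / (2 * σ ^ 2)) • (y j - y i) := by
  have : Nonempty (Fin N) := ⟨⟨0, hN⟩⟩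
  set E : Fin N → ℝ := fun i => Real.exp (-‖y j + σ • ε - y i‖ ^ 2 / (2 * σ ^ 2)) with hE
  set C : ℝ := (2 * Real.pi * (t * σ) ^ 2) ^ (-(n : ℝ) / 2) with hCdef
  have hC : 0 < C := Real.rpow_pos_of_pos (by positivity) _
  have hS : 0 < ∑ i, E i := Finset.sum_pos (fun i _ => Real.exp_pos _) Finset.univ_nonempty
  have h1 : ∀ i, gaussDensity n (t • y i) (t * σ) (t • (y j + σ • ε)) = C * E i := by
    intro i
    have hv : t • (y j + σ • ε) - t • y i = t • (y j + σ • ε - y i) := (smul_sub t _ _).symm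
    rw [gaussDensity, hv, norm_smul, Real.norm_eq_abs, abs_of_pos ht, hCdef]
    congr 1
    rw [mul_pow, mul_pow]
    rw [show (2:ℝ) * (t^2 * σ^2) = t^2 * (2 * σ^2) by ring, neg_div,
      mul_div_mul_left _ _ (by positivity : (t:ℝ)^2 ≠ 0), ← neg_div]
  have h2 : (∑ i, gaussDensity n (t • y i) (t * σ) (t • (y j + σ • ε))) = C * ∑ i, E i := by
    simp only [h1, ← Finset.mul_sum]
  have h3 : (∑ i, gaussDensity n (t • y i) (t * σ) (t • (y j + σ • ε)) • y i)
      = C • ∑ i, E i • y i := by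
    simp only [h1, mul_smul, ← Finset.smul_sum]
  have hsum : ∑ i, E i • (y j - y i) = (∑ i, E i) • y j - ∑ i, E i • y i := by
    rw [Finset.sum_smul, ← Finset.sum_sub_distrib]
    exact Finset.sum_congr rfl fun i _ => smul_sub _ _ _
  rw [optDenoiser, h2, h3, hsum]
  exact alg_aux _ _ _ _ _ _ _ ht.ne' hσ.ne' hC.ne' hS.ne'

/-- Low-noise limit: on the forward-perturbed data point `x_t = s(y j + σ ε)`, where `y j`
is not duplicated in the dataset, the optimal denoiser converges to `ε` as `σ → 0⁺`, for any
choice of scaling `s = s(σ) > 0`. -/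
theorem optDenoiser_tendsto_noise_low_noise (n N : ℕ) (hn : 0 < n) (hN : 0 < N)
    (y : Fin N → EuclideanSpace ℝ (Fin n)) (j : Fin N) (hj : ∀ i, i ≠ j → y i ≠ y j)
    (ε : EuclideanSpace ℝ (Fin n)) (s : ℝ → ℝ) (hs : ∀ σ, 0 < s σ) :
    Tendsto (fun σ : ℝ => optDenoiser n N y (s σ) σ ((s σ) • (y j + σ • ε)))
      (𝓝[>] 0) (𝓝 ε) := by
  have hNe : Nonempty (Fin N) := ⟨⟨0, hN⟩⟩
  have hc : (0:ℝ) < Real.exp (-‖ε‖ ^ 2 / 2) := Real.exp_pos _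
  -- the j-th weight is constant in σ
  have hEj : ∀ σ : ℝ, 0 < σ →
      Real.exp (-‖y j + σ • ε - y j‖ ^ 2 / (2 * σ ^ 2)) = Real.exp (-‖ε‖ ^ 2 / 2) := by
    intro σ hσ
    simp only [add_sub_cancel_left, norm_smul, Real.norm_eq_abs, abs_of_pos hσ, mul_pow]
    congr 1
    field_simp
  -- per-index decay of the bound summands
  have hterm : ∀ i : Fin N,
      Tendsto (fun σ : ℝ =>
          (Real.exp (-‖y j + σ • ε - y i‖ ^ 2 / (2 * σ ^ 2)) / σ) * ‖y j - y i‖)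
        (𝓝[>] (0:ℝ)) (𝓝 0) := by
    intro i
    by_cases hi : i = j
    · subst hi
      simp only [sub_self, norm_zero, mul_zero]
      exact tendsto_const_nhds
    · have hy : y j - y i ≠ 0 := sub_ne_zero.mpr (Ne.symm (hj i hi))
      have ha : 0 < ‖y j - y i‖ ^ 2 := pow_pos (norm_pos_iff.mpr hy) 2
      have hcont : Continuous fun σ : ℝ => ‖y j + σ • ε - y i‖ ^ 2 :=
        (((continuous_const.add (continuous_id.smul continuous_const)).sub
          continuous_const).norm.pow 2)
      have hf : Tendsto (fun σ : ℝ => ‖y j + σ • ε - y i‖ ^ 2) (𝓝[>] (0:ℝ))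
          (𝓝 (‖y j - y i‖ ^ 2)) := by
        have := (hcont.tendsto 0).mono_left (nhdsWithin_le_nhds (s := Set.Ioi (0:ℝ)))
        simpa using this
      have := (decay_aux _ ha _ hf).mul_const ‖y j - y i‖
      simpa using this
  -- the bound tends to 0
  have hB : Tendsto (fun σ : ℝ => (Real.exp (-‖ε‖ ^ 2 / 2))⁻¹ *
      ∑ i, (Real.exp (-‖y j + σ • ε - y i‖ ^ 2 / (2 * σ ^ 2)) / σ) * ‖y j - y i‖)
      (𝓝[>] (0:ℝ)) (𝓝 0) := by
    have h0 := tendsto_finset_sum Finset.univ (fun i (_ : i ∈ Finset.univ) => hterm i)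
    have := h0.const_mul (Real.exp (-‖ε‖ ^ 2 / 2))⁻¹
    simpa using this
  -- the remainder term tends to 0
  have hv : Tendsto (fun σ : ℝ =>
      (σ⁻¹ * (∑ i, Real.exp (-‖y j + σ • ε - y i‖ ^ 2 / (2 * σ ^ 2)))⁻¹) •
        ∑ i, Real.exp (-‖y j + σ • ε - y i‖ ^ 2 / (2 * σ ^ 2)) • (y j - y i))
      (𝓝[>] (0:ℝ)) (𝓝 (0 : EuclideanSpace ℝ (Fin n))) := by
    refine squeeze_zero_norm' ?_ hB
    filter_upwards [self_mem_nhdsWithin] with σ (hσ : 0 < σ)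
    have hS : (0:ℝ) < ∑ i, Real.exp (-‖y j + σ • ε - y i‖ ^ 2 / (2 * σ ^ 2)) :=
      Finset.sum_pos (fun i _ => Real.exp_pos _) Finset.univ_nonempty
    have hcS : Real.exp (-‖ε‖ ^ 2 / 2) ≤
        ∑ i, Real.exp (-‖y j + σ • ε - y i‖ ^ 2 / (2 * σ ^ 2)) := by
      rw [← hEj σ hσ]
      exact Finset.single_le_sum (f := fun i =>
        Real.exp (-‖y j + σ • ε - y i‖ ^ 2 / (2 * σ ^ 2)))
        (fun i _ => (Real.exp_pos _).le) (Finset.mem_univ j)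
    have hW : ‖∑ i, Real.exp (-‖y j + σ • ε - y i‖ ^ 2 / (2 * σ ^ 2)) • (y j - y i)‖ ≤
        ∑ i, Real.exp (-‖y j + σ • ε - y i‖ ^ 2 / (2 * σ ^ 2)) * ‖y j - y i‖ := by
      refine (norm_sum_le _ _).trans_eq (Finset.sum_congr rfl fun i _ => ?_)
      rw [norm_smul, Real.norm_eq_abs, abs_of_pos (Real.exp_pos _)]
    calc ‖(σ⁻¹ * (∑ i, Real.exp (-‖y j + σ • ε - y i‖ ^ 2 / (2 * σ ^ 2)))⁻¹) •
            ∑ i, Real.exp (-‖y j + σ • ε - y i‖ ^ 2 / (2 * σ ^ 2)) • (y j - y i)‖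
        = σ⁻¹ * (∑ i, Real.exp (-‖y j + σ • ε - y i‖ ^ 2 / (2 * σ ^ 2)))⁻¹ *
            ‖∑ i, Real.exp (-‖y j + σ • ε - y i‖ ^ 2 / (2 * σ ^ 2)) • (y j - y i)‖ := by
          rw [norm_smul, Real.norm_eq_abs, abs_of_pos (by positivity)]
      _ ≤ σ⁻¹ * (Real.exp (-‖ε‖ ^ 2 / 2))⁻¹ *
            ∑ i, Real.exp (-‖y j + σ • ε - y i‖ ^ 2 / (2 * σ ^ 2)) * ‖y j - y i‖ := by
          have h1 : (∑ i, Real.exp (-‖y j + σ • ε - y i‖ ^ 2 / (2 * σ ^ 2)))⁻¹ ≤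
              (Real.exp (-‖ε‖ ^ 2 / 2))⁻¹ := inv_anti₀ hc hcS
          have hn1 : (0:ℝ) ≤ σ⁻¹ := by positivity
          refine mul_le_mul (mul_le_mul le_rfl h1 (by positivity) hn1) hW (norm_nonneg _) ?_
          positivity
      _ = (Real.exp (-‖ε‖ ^ 2 / 2))⁻¹ *
            ∑ i, (Real.exp (-‖y j + σ • ε - y i‖ ^ 2 / (2 * σ ^ 2)) / σ) * ‖y j - y i‖ := by
          rw [Finset.mul_sum, Finset.mul_sum]
          refine Finset.sum_congr rfl fun i _ => ?_
          ring
  -- combine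
  have hlim : Tendsto (fun σ : ℝ =>
      ε + (σ⁻¹ * (∑ i, Real.exp (-‖y j + σ • ε - y i‖ ^ 2 / (2 * σ ^ 2)))⁻¹) •
        ∑ i, Real.exp (-‖y j + σ • ε - y i‖ ^ 2 / (2 * σ ^ 2)) • (y j - y i))
      (𝓝[>] (0:ℝ)) (𝓝 ε) := by
    have := (tendsto_const_nhds (x := ε) (f := 𝓝[>] (0:ℝ))).add hv
    simpa using this
  refine Tendsto.congr' ?_ hlim
  filter_upwards [self_mem_nhdsWithin] with σ (hσ : 0 < σ)
  exact (key_eq n N hN y j ε (s σ) σ (hs σ) hσ).symm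
end
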